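/- Let X and Y be Banach spaces and let f : X → Y be strictly differentiable at x̄ with surjective strict derivative ∇f(x̄). Then there exist a neighborhood V of ȳ := f(x̄) and a continuous function x : V → X with x(ȳ) = x̄ and f(x(y)) = y for all y ∈ V, whose calmness modulus at ȳ satisfies clm x(ȳ) ≤ 2 sup{ d(0, ∇f(x̄)⁻¹(y)) : y ∈ 𝔹 }, where 𝔹 is the closed unit ball of Y and d(0, ∇f(x̄)⁻¹(y)) is the distance from 0 to the preimage of y under ∇f(x̄). -/

import Mathlib

open Metric Filter Set

set_option maxHeartbeats 1000000

/-- The modulus of calmness `clm s(ybar)` of `s : Y → X` at `ybar`: the infimum of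
constants `γ` with `‖s y - s ybar‖ ≤ γ‖y - ybar‖` for all `y` near `ybar`. -/
noncomputable def clmModulus {X Y : Type*} [NormedAddCommGroup X] [NormedAddCommGroup Y]
    (s : Y → X) (ybar : Y) : ENNReal :=
  ⨅ (γ : NNReal) (_ : ∃ ε > (0 : ℝ), ∀ y ∈ ball ybar ε,
      ‖s y - s ybar‖ ≤ (γ : ℝ) * ‖y - ybar‖), (γ : ENNReal)

lemma exists_approx_right_inverse {X Y : Type*} [NormedAddCommGroup X] [NormedSpace ℝ X]
    [NormedAddCommGroup Y] [NormedSpace ℝ Y]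
    (B : X →L[ℝ] Y) {a b δ : ℝ} (hab : a < b) (hδ : 0 < δ) (ha : 0 ≤ a)
    (H : ∀ y : Y, ∃ x, B x = y ∧ ‖x‖ ≤ a * ‖y‖) :
    ∃ σ : Y → X, Continuous σ ∧ σ 0 = 0 ∧
      ∀ z, ‖B (σ z) - z‖ ≤ δ * ‖z‖ ∧ ‖σ z‖ ≤ b * ‖z‖ := by
  classical
  have hb : 0 < b := lt_of_le_of_lt ha hab
  set S : Set Y := {0}ᶜ with hS
  set t : S → Set X := fun z =>
    B ⁻¹' closedBall (z : Y) (δ * ‖(z : Y)‖) ∩ closedBall 0 (b * ‖(z : Y)‖) with ht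
  have hconv : ∀ z : S, Convex ℝ (t z) := fun z =>
    ((convex_closedBall _ _).linear_preimage (B : X →ₗ[ℝ] Y)).inter (convex_closedBall _ _)
  have hloc : ∀ z : S, ∃ c : X, ∀ᶠ w in nhds z, c ∈ t w := by
    intro z
    have hz0 : (z : Y) ≠ 0 := z.2
    have hz : 0 < ‖(z : Y)‖ := norm_pos_iff.2 hz0
    obtain ⟨x, hBx, hx⟩ := H (z : Y)
    set r : ℝ := min (δ * ‖(z : Y)‖ / (1 + δ)) ((b - a) * ‖(z : Y)‖ / b) with hr
    have hr0 : 0 < r := lt_min (div_pos (mul_pos hδ hz) (by linarith))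
      (div_pos (mul_pos (by linarith) hz) hb)
    have hA : r * (1 + δ) ≤ δ * ‖(z : Y)‖ :=
      (le_div_iff₀ (by linarith)).1 (min_le_left _ _)
    have hB : r * b ≤ (b - a) * ‖(z : Y)‖ :=
      (le_div_iff₀ hb).1 (min_le_right _ _)
    refine ⟨x, ?_⟩
    have hg : Tendsto (fun w : S => ‖(w : Y) - (z : Y)‖) (nhds z)
        (nhds ‖(z : Y) - (z : Y)‖) :=
      ((continuous_subtype_val.sub continuous_const).norm.continuousAt : _)
    simp only [sub_self, norm_zero] at hg
    filter_upwards [hg.eventually_lt_const hr0] with w hw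
    have hnw : ‖(z : Y)‖ - ‖(w : Y)‖ < r := by
      have := norm_sub_norm_le ((z : Y)) ((w : Y))
      rw [norm_sub_rev] at hw
      linarith
    constructor
    · rw [mem_preimage, mem_closedBall_iff_norm, hBx]
      rw [norm_sub_rev] at hw
      nlinarith [mul_nonneg hδ.le (show (0:ℝ) ≤ ‖(w:Y)‖ - (‖(z:Y)‖ - r) by linarith)]
    · rw [mem_closedBall_zero_iff]
      nlinarith [mul_nonneg hb.le (show (0:ℝ) ≤ ‖(w:Y)‖ - (‖(z:Y)‖ - r) by linarith)]
  obtain ⟨g, hg⟩ := exists_continuous_forall_mem_convex_of_local_const hconv hloc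
  refine ⟨fun y => if h : y = 0 then 0 else g ⟨y, h⟩, ?_, dif_pos rfl, ?_⟩
  · rw [continuous_iff_continuousAt]
    intro y
    rcases eq_or_ne y 0 with rfl | hy
    · have hbd : ∀ z : Y, ‖if h : z = 0 then (0:X) else g ⟨z, h⟩‖ ≤ b * ‖z‖ := by
        intro z
        rcases eq_or_ne z 0 with rfl | hz
        · simp
        · rw [dif_neg hz]
          exact mem_closedBall_zero_iff.1 (hg ⟨z, hz⟩).2
      have hb0 : Tendsto (fun z : Y => b * ‖z‖) (nhds 0) (nhds (b * ‖(0:Y)‖)) :=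
        (continuous_const.mul continuous_norm).tendsto 0
      simp only [norm_zero, mul_zero] at hb0
      have := squeeze_zero_norm hbd hb0
      simpa [ContinuousAt] using this
    · have hrestr : ContinuousOn (fun y : Y => if h : y = 0 then (0:X) else g ⟨y, h⟩) S := by
        rw [continuousOn_iff_continuous_restrict]
        have : S.restrict (fun y : Y => if h : y = 0 then (0:X) else g ⟨y, h⟩)
            = fun z : S => g z := by
          funext z
          exact dif_neg (show ¬((z:Y) = 0) from z.2)
        refine (congrArg Continuous this).mpr ?_
        exact g.continuous
      exact hrestr.continuousAt (isOpen_compl_singleton.mem_nhds hy)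
  · intro z
    rcases eq_or_ne z 0 with rfl | hz
    · simp
    · simp only [dif_neg hz]
      have h1 := (hg ⟨z, hz⟩).1
      have h2 := (hg ⟨z, hz⟩).2
      rw [mem_preimage, mem_closedBall_iff_norm] at h1
      rw [mem_closedBall_zero_iff] at h2
      exact ⟨h1, h2⟩

/-- If `f` is strictly differentiable at `xbar` with surjective strict derivative `B`,
then some continuous local inverse selection `s` of `f` around `ybar := f xbar` exists
with `s ybar = xbar` and calmness modulus at most
`2 sup { d(0, B⁻¹(y)) : y ∈ 𝔹 }`. -/
theorem continuous_inverse_selection_calmness_bound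
    {X Y : Type*} [NormedAddCommGroup X] [NormedSpace ℝ X] [CompleteSpace X]
    [NormedAddCommGroup Y] [NormedSpace ℝ Y] [CompleteSpace Y]
    (f : X → Y) (xbar : X) (B : X →L[ℝ] Y)
    (hf : HasStrictFDerivAt f B xbar) (hsurj : Function.Surjective B) :
    ∃ V ∈ nhds (f xbar), ∃ s : Y → X,
      ContinuousOn s V ∧ s (f xbar) = xbar ∧
      (∀ y ∈ V, f (s y) = y) ∧
      clmModulus s (f xbar) ≤
        2 * ⨆ y ∈ closedBall (0 : Y) 1, EMetric.infEdist (0 : X) (B ⁻¹' {y}) := by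
  classical
  set ybar := f xbar with hybar_def
  set K : ENNReal := ⨆ y ∈ closedBall (0 : Y) 1, EMetric.infEdist (0 : X) (B ⁻¹' {y}) with hKdef
  obtain ⟨C, hC0, hC⟩ := B.exists_preimage_norm_le hsurj
  have hKle : ∀ y ∈ closedBall (0 : Y) 1, EMetric.infEdist (0 : X) (B ⁻¹' {y}) ≤ K := by
    intro y hy
    exact le_iSup₂ (f := fun y _ => EMetric.infEdist (0 : X) (B ⁻¹' {y})) y hy
  have hKtop : K ≠ ⊤ := by
    refine ne_top_of_le_ne_top (b := ENNReal.ofReal C) ENNReal.ofReal_ne_top ?_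
    refine iSup₂_le fun y hy => ?_
    obtain ⟨x, hx, hxn⟩ := hC y
    refine le_trans (EMetric.infEdist_le_edist_of_mem (y := x) (by simp [Set.mem_preimage, hx])) ?_
    rw [edist_comm, edist_zero_right, ← ofReal_norm]
    refine ENNReal.ofReal_le_ofReal ?_
    have hy1 : ‖y‖ ≤ 1 := mem_closedBall_zero_iff.1 hy
    nlinarith [norm_nonneg y]
  by_cases hK0 : K = 0
  · -- Y is trivial
    have hY : ∀ y : Y, y = 0 := by
      intro y
      by_contra hy
      have hny : ‖y‖ ≠ 0 := norm_ne_zero_iff.2 hy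
      have hu : ‖y‖⁻¹ • y ∈ closedBall (0 : Y) 1 := by
        rw [mem_closedBall_zero_iff, norm_smul, norm_inv, norm_norm,
          inv_mul_cancel₀ hny]
      have h1 : EMetric.infEdist (0 : X) (B ⁻¹' {‖y‖⁻¹ • y}) = 0 :=
        le_antisymm (hK0 ▸ hKle _ hu) zero_le
      have hcl : IsClosed (B ⁻¹' {‖y‖⁻¹ • y}) :=
        isClosed_singleton.preimage B.continuous
      have h0m : (0 : X) ∈ B ⁻¹' {‖y‖⁻¹ • y} := by
        rw [← hcl.closure_eq]
        exact EMetric.mem_closure_iff_infEdist_zero.2 h1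
      rw [mem_preimage, mem_singleton_iff, map_zero] at h0m
      apply hny
      have := congrArg (fun z => ‖z‖) h0m
      simpa [norm_smul, inv_mul_cancel₀ hny] using this.symm
    refine ⟨Set.univ, Filter.univ_mem, fun _ => xbar, continuousOn_const, rfl,
      fun y _ => (hY _).trans (hY y).symm, ?_⟩
    refine le_trans (iInf₂_le 0 ⟨1, one_pos, fun y _ => by simp⟩) ?_
    simp
  · -- main case
    set k : ℝ := K.toReal with hkdef
    have hk : 0 < k := ENNReal.toReal_pos hK0 hKtop
    have hKk : K = ENNReal.ofReal k := (ENNReal.ofReal_toReal hKtop).symm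
    have Hpre : ∀ y : Y, ∃ x, B x = y ∧ ‖x‖ ≤ 5 / 4 * k * ‖y‖ := by
      intro y
      rcases eq_or_ne y 0 with rfl | hy
      · exact ⟨0, by simp, by simp⟩
      · have hny : ‖y‖ ≠ 0 := norm_ne_zero_iff.2 hy
        have hu : ‖y‖⁻¹ • y ∈ closedBall (0 : Y) 1 := by
          rw [mem_closedBall_zero_iff, norm_smul, norm_inv, norm_norm,
            inv_mul_cancel₀ hny]
        have h1 : EMetric.infEdist (0 : X) (B ⁻¹' {‖y‖⁻¹ • y})
            < ENNReal.ofReal (5 / 4 * k) := by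
          refine lt_of_le_of_lt (hKle _ hu) ?_
          rw [hKk]
          rw [ENNReal.ofReal_lt_ofReal_iff (by linarith)]
          nlinarith
        obtain ⟨x', hx', hd⟩ := EMetric.infEdist_lt_iff.1 h1
        rw [edist_comm, edist_zero_right, ← ofReal_norm] at hd
        have hx'n : ‖x'‖ < 5 / 4 * k :=
          (ENNReal.ofReal_lt_ofReal_iff (by linarith)).1 hd
        rw [mem_preimage, mem_singleton_iff] at hx'
        refine ⟨‖y‖ • x', ?_, ?_⟩
        · rw [map_smul, hx', smul_smul, mul_inv_cancel₀ hny, one_smul]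
        · rw [norm_smul, norm_norm]
          nlinarith [norm_nonneg y, norm_nonneg x']
    obtain ⟨σ, hσc, hσ0, hσ⟩ := exists_approx_right_inverse B (δ := 1/8)
      (show 5 / 4 * k < 3 / 2 * k by nlinarith) (by norm_num)
      (show (0:ℝ) ≤ 5 / 4 * k by nlinarith) Hpre
    -- approximate linearity with constant c
    set c : NNReal := Real.toNNReal (1 / (12 * k)) with hcdef
    have hc0 : 0 < c := Real.toNNReal_pos.2 (one_div_pos.2 (by linarith))
    have hcr : (c : ℝ) = 1 / (12 * k) := Real.coe_toNNReal _ (one_div_nonneg.2 (by linarith))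
    obtain ⟨s₀, hs₀, hA₀⟩ := hf.approximates_deriv_on_nhds (Or.inr hc0)
    obtain ⟨ρ, hρ0, hρ⟩ := nhds_basis_closedBall.mem_iff.1 hs₀
    have hA : ApproximatesLinearOn f B (closedBall xbar ρ) c :=
      fun x hx y hy => hA₀ x (hρ hx) y (hρ hy)
    set r : ℝ := ρ / (2 * k) with hrdef
    have hr0 : 0 < r := div_pos hρ0 (by linarith)
    have h2kr : 2 * k * r = ρ := by
      rw [hrdef]; field_simp
    -- the iteration
    set u : Y → ℕ → X := fun y n =>
      Nat.rec xbar (fun _ xn => xn + σ (y - f xn)) n with hudef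
    have hu0 : ∀ y, u y 0 = xbar := fun y => rfl
    have huS : ∀ y n, u y (n + 1) = u y n + σ (y - f (u y n)) := fun y n => rfl
    have key : ∀ y ∈ ball ybar r, ∀ n : ℕ,
        ‖y - f (u y n)‖ ≤ (1 / 4) ^ n * ‖y - ybar‖ ∧
        ‖u y n - xbar‖ ≤ 2 * k * (1 - (1 / 4) ^ n) * ‖y - ybar‖ := by
      intro y hy n
      have hd0 : ‖y - ybar‖ < r := by rwa [mem_ball, dist_eq_norm] at hy
      have hdnn : 0 ≤ ‖y - ybar‖ := norm_nonneg _
      induction n with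
      | zero => constructor <;> simp [hu0, ← hybar_def]
      | succ n ih =>
        obtain ⟨ih1, ih2⟩ := ih
        have hq0 : (0:ℝ) < (1/4 : ℝ) ^ n := by positivity
        have hq1 : ((1:ℝ)/4) ^ n ≤ 1 := pow_le_one₀ (by norm_num) (by norm_num)
        have hz : 0 ≤ ‖y - f (u y n)‖ := norm_nonneg _
        have hb1 : ‖σ (y - f (u y n))‖ ≤ 3 / 2 * k * ‖y - f (u y n)‖ :=
          (hσ (y - f (u y n))).2
        have hb2 : ‖B (σ (y - f (u y n))) - (y - f (u y n))‖
            ≤ 1 / 8 * ‖y - f (u y n)‖ := (hσ (y - f (u y n))).1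
        have hmem_n : u y n ∈ closedBall xbar ρ := by
          rw [mem_closedBall, dist_eq_norm]
          refine le_trans ih2 ?_
          rw [← h2kr]
          nlinarith [mul_nonneg (mul_nonneg (by linarith : (0:ℝ) ≤ 2 * k) hq0.le) hdnn,
            mul_nonneg hk.le (sub_nonneg.2 hd0.le)]
        have hstep2 : ‖u y (n + 1) - xbar‖
            ≤ 2 * k * (1 - (1 / 4) ^ (n + 1)) * ‖y - ybar‖ := by
          have : u y (n + 1) - xbar = (u y n - xbar) + σ (y - f (u y n)) := by
            rw [huS]; abel
          rw [this]
          refine le_trans (norm_add_le _ _) ?_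
          have h3 : ‖σ (y - f (u y n))‖ ≤ 3 / 2 * k * ((1 / 4) ^ n * ‖y - ybar‖) := by
            refine le_trans hb1 ?_
            nlinarith
          rw [pow_succ]
          nlinarith
        have hmem_n1 : u y (n + 1) ∈ closedBall xbar ρ := by
          rw [mem_closedBall, dist_eq_norm]
          refine le_trans hstep2 ?_
          rw [← h2kr]
          have hq0' : (0:ℝ) < (1/4 : ℝ) ^ (n+1) := by positivity
          have hq1' : ((1:ℝ)/4) ^ (n+1) ≤ 1 := pow_le_one₀ (by norm_num) (by norm_num)
          nlinarith [mul_nonneg (mul_nonneg (by linarith : (0:ℝ) ≤ 2 * k) hq0'.le) hdnn,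
            mul_nonneg hk.le (sub_nonneg.2 hd0.le)]
        refine ⟨?_, hstep2⟩
        have hiden : y - f (u y (n + 1)) =
            ((y - f (u y n)) - B (σ (y - f (u y n))))
              - (f (u y (n + 1)) - f (u y n) - B (u y (n + 1) - u y n)) := by
          have hdiff : u y (n + 1) - u y n = σ (y - f (u y n)) := by
            rw [huS]; abel
          rw [hdiff]; abel
        have hAest := hA _ hmem_n1 _ hmem_n
        have hdiff : u y (n + 1) - u y n = σ (y - f (u y n)) := by
          rw [huS]; abel
        rw [hdiff] at hAest
        rw [hiden, hdiff]
        refine le_trans (norm_sub_le _ _) ?_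
        have h4 : ‖(y - f (u y n)) - B (σ (y - f (u y n)))‖
            ≤ 1 / 8 * ‖y - f (u y n)‖ := by
          rw [norm_sub_rev]; exact hb2
        have h5 : (c : ℝ) * ‖σ (y - f (u y n))‖ ≤ 1 / 8 * ‖y - f (u y n)‖ := by
          rw [hcr]
          have h6 : (1 / (12 * k)) * ‖σ (y - f (u y n))‖
              ≤ (1 / (12 * k)) * (3 / 2 * k * ‖y - f (u y n)‖) := by
            refine mul_le_mul_of_nonneg_left hb1 (one_div_nonneg.2 (by linarith))
          refine le_trans h6 (le_of_eq ?_)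
          field_simp
          ring
        rw [pow_succ]
        calc ‖y - f (u y n) - B (σ (y - f (u y n)))‖
              + ‖f (u y (n + 1)) - f (u y n) - B (σ (y - f (u y n)))‖
            ≤ 1 / 8 * ‖y - f (u y n)‖ + 1 / 8 * ‖y - f (u y n)‖ :=
          add_le_add h4 (hAest.trans h5)
        _ = 1 / 4 * ‖y - f (u y n)‖ := by ring
        _ ≤ 1 / 4 * ((1 / 4) ^ n * ‖y - ybar‖) := by linarith
        _ = (1 / 4) ^ n * (1 / 4) * ‖y - ybar‖ := by ring
    -- membership of iterates
    have hmemcb : ∀ y ∈ ball ybar r, ∀ n, u y n ∈ closedBall xbar ρ := by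
      intro y hy n
      have hd0 : ‖y - ybar‖ < r := by rwa [mem_ball, dist_eq_norm] at hy
      have hdnn : 0 ≤ ‖y - ybar‖ := norm_nonneg _
      have hq0 : (0:ℝ) < (1/4 : ℝ) ^ n := by positivity
      have hq1 : ((1:ℝ)/4) ^ n ≤ 1 := pow_le_one₀ (by norm_num) (by norm_num)
      rw [mem_closedBall, dist_eq_norm]
      refine le_trans (key y hy n).2 ?_
      rw [← h2kr]
      nlinarith [mul_nonneg (mul_nonneg (by linarith : (0:ℝ) ≤ 2 * k) hq0.le) hdnn,
        mul_nonneg hk.le (sub_nonneg.2 hd0.le)]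
    -- Cauchy and limit
    have hstep : ∀ y ∈ ball ybar r, ∀ n,
        dist (u y n) (u y (n + 1)) ≤ 3 / 2 * k * ‖y - ybar‖ * (1 / 4) ^ n := by
      intro y hy n
      have h1 := (key y hy n).1
      have h2 := (hσ (y - f (u y n))).2
      have : dist (u y n) (u y (n + 1)) = ‖σ (y - f (u y n))‖ := by
        rw [dist_eq_norm, huS]
        rw [show u y n - (u y n + σ (y - f (u y n))) = -(σ (y - f (u y n))) by abel,
          norm_neg]
      rw [this]
      have hq0 : (0:ℝ) ≤ (1/4 : ℝ) ^ n := by positivity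
      nlinarith [norm_nonneg (y - f (u y n))]
    have hcauchy : ∀ y ∈ ball ybar r, CauchySeq (u y) := fun y hy =>
      cauchySeq_of_le_geometric (1/4) (3 / 2 * k * ‖y - ybar‖) (by norm_num) (hstep y hy)
    set s : Y → X := fun y => limUnder atTop (u y) with hsdef
    have hlim : ∀ y ∈ ball ybar r, Tendsto (u y) atTop (nhds (s y)) := fun y hy =>
      (hcauchy y hy).tendsto_limUnder
    have htail : ∀ y ∈ ball ybar r, ∀ n,
        ‖u y n - s y‖ ≤ 2 * k * ‖y - ybar‖ * (1 / 4) ^ n := by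
      intro y hy n
      have := dist_le_of_le_geometric_of_tendsto (1/4) (3 / 2 * k * ‖y - ybar‖)
        (by norm_num) (hstep y hy) (hlim y hy) n
      rw [dist_eq_norm] at this
      refine le_trans this (le_of_eq ?_)
      ring
    have hsbound : ∀ y ∈ ball ybar r, ‖s y - xbar‖ ≤ 2 * k * ‖y - ybar‖ := by
      intro y hy
      have hT : Tendsto (fun n => ‖u y n - xbar‖) atTop (nhds ‖s y - xbar‖) :=
        ((hlim y hy).sub tendsto_const_nhds).norm
      refine le_of_tendsto hT (Filter.Eventually.of_forall fun n => ?_)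
      have h1 := (key y hy n).2
      have hq0 : (0:ℝ) ≤ (1/4 : ℝ) ^ n := by positivity
      nlinarith [norm_nonneg (y - ybar),
        mul_nonneg (mul_nonneg (by linarith : (0:ℝ) ≤ 2 * k) hq0) (norm_nonneg (y - ybar))]
    have hsmem : ∀ y ∈ ball ybar r, s y ∈ closedBall xbar ρ := by
      intro y hy
      have hd0 : ‖y - ybar‖ < r := by rwa [mem_ball, dist_eq_norm] at hy
      rw [mem_closedBall, dist_eq_norm]
      refine le_trans (hsbound y hy) ?_
      rw [← h2kr]
      nlinarith [norm_nonneg (y - ybar)]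
    -- f (s y) = y
    have hfs : ∀ y ∈ ball ybar r, f (s y) = y := by
      intro y hy
      have h1 : Tendsto (fun n => f (u y n)) atTop (nhds (f (s y))) := by
        have htnw : Tendsto (u y) atTop (nhdsWithin (s y) (closedBall xbar ρ)) :=
          tendsto_nhdsWithin_of_tendsto_nhds_of_eventually_within _ (hlim y hy)
            (Filter.Eventually.of_forall (hmemcb y hy))
        exact ((hA.continuousOn (s y) (hsmem y hy)).tendsto).comp htnw
      have h2 : Tendsto (fun n => f (u y n)) atTop (nhds y) := by
        have hz : Tendsto (fun n => y - f (u y n)) atTop (nhds 0) := by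
          refine squeeze_zero_norm (fun n => (key y hy n).1) ?_
          have := (tendsto_pow_atTop_nhds_zero_of_lt_one
            (by norm_num : (0:ℝ) ≤ 1/4) (by norm_num)).mul_const ‖y - ybar‖
          simpa using this
        have := (tendsto_const_nhds (x := y) (f := atTop)).sub hz
        simpa using this
      exact tendsto_nhds_unique h1 h2
    -- s ybar = xbar
    have hybar_mem : ybar ∈ ball ybar r := mem_ball_self hr0
    have hconst : ∀ n, u ybar n = xbar := by
      intro n
      induction n with
      | zero => exact hu0 ybar
      | succ n ih =>
        rw [huS, ih, ← hybar_def, sub_self, hσ0, add_zero]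
    have hsybar : s ybar = xbar := by
      refine tendsto_nhds_unique (hlim ybar hybar_mem) ?_
      have : u ybar = fun _ => xbar := funext hconst
      rw [this]
      exact tendsto_const_nhds
    -- continuity
    have hcontn : ∀ n, ContinuousOn (fun y => u y n) (ball ybar r) := by
      intro n
      induction n with
      | zero => exact continuousOn_const
      | succ n ih =>
        have hmaps : Set.MapsTo (fun y => u y n) (ball ybar r) (closedBall xbar ρ) :=
          fun y hy => hmemcb y hy n
        have h1 : ContinuousOn (fun y => f (u y n)) (ball ybar r) :=
          hA.continuousOn.comp ih hmaps
        have h2 : ContinuousOn (fun y => u y n + σ (y - f (u y n))) (ball ybar r) :=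
          ih.add (hσc.comp_continuousOn (continuousOn_id.sub h1))
        have : (fun y => u y (n + 1)) = fun y => u y n + σ (y - f (u y n)) :=
          funext fun y => huS y n
        rw [this]
        exact h2
    have hunif : TendstoUniformlyOn (fun n y => u y n) s atTop (ball ybar r) := by
      rw [Metric.tendstoUniformlyOn_iff]
      intro ε hε
      have hT : Tendsto (fun n : ℕ => 2 * k * r * (1/4) ^ n) atTop (nhds 0) := by
        have := (tendsto_pow_atTop_nhds_zero_of_lt_one
          (by norm_num : (0:ℝ) ≤ 1/4) (by norm_num)).const_mul (2 * k * r)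
        simpa using this
      filter_upwards [hT.eventually_lt_const hε] with n hn y hy
      have hd0 : ‖y - ybar‖ < r := by rwa [mem_ball, dist_eq_norm] at hy
      have hq0 : (0:ℝ) ≤ (1/4 : ℝ) ^ n := by positivity
      rw [dist_comm, dist_eq_norm]
      refine lt_of_le_of_lt (le_trans (htail y hy n) ?_) hn
      nlinarith [norm_nonneg (y - ybar),
        mul_nonneg (mul_nonneg hk.le hq0) (sub_nonneg.2 hd0.le)]
    have hscont : ContinuousOn s (ball ybar r) :=
      hunif.continuousOn (Filter.Eventually.of_forall hcontn).frequently
    -- assembling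
    refine ⟨ball ybar r, ball_mem_nhds _ hr0, s, hscont, hsybar, hfs, ?_⟩
    have hbound : clmModulus s ybar ≤ ((Real.toNNReal (2 * k) : NNReal) : ENNReal) := by
      refine iInf₂_le _ ⟨r, hr0, fun y hy => ?_⟩
      rw [hsybar, Real.coe_toNNReal (2 * k) (by linarith)]
      exact hsbound y hy
    refine le_trans hbound ?_
    have h1 : ((Real.toNNReal (2 * k) : NNReal) : ENNReal) = ENNReal.ofReal (2 * k) := rfl
    rw [h1, ENNReal.ofReal_mul (by norm_num : (0:ℝ) ≤ 2), hKk]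
    gcongr
    simp [ENNReal.ofReal_ofNat]
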